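/- For any positive integers i and n, Σ_{k=1}^{n} σ_0(gcd(i,k))·σ(k)/k = Σ_{d | i} Σ_{k=1}^{⌊n/d⌋} σ(kd)/(kd). -/

import Mathlib

/-- `∑_{k=1}^{n} σ₀(gcd(i,k))·σ(k)/k = ∑_{d ∣ i} ∑_{k=1}^{⌊n/d⌋} σ(kd)/(kd)`. -/
theorem sum_sigma0_gcd_eq (i n : ℕ) (hi : 0 < i) (hn : 0 < n) :
    ∑ k ∈ Finset.Icc 1 n, (ArithmeticFunction.sigma 0 (Nat.gcd i k) : ℝ) * (ArithmeticFunction.sigma 1 k : ℝ) / k =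
    ∑ d ∈ i.divisors, ∑ k ∈ Finset.Icc 1 (n / d), (ArithmeticFunction.sigma 1 (k * d) : ℝ) / (k * d) := by
  have h1 : ∀ k ∈ Finset.Icc 1 n,
      (ArithmeticFunction.sigma 0 (Nat.gcd i k) : ℝ) * (ArithmeticFunction.sigma 1 k : ℝ) / k
      = ∑ d ∈ i.divisors, (if d ∣ k then (ArithmeticFunction.sigma 1 k : ℝ) / k else 0) := by
    intro k hk
    rw [Finset.mem_Icc] at hk
    have hk0 : k ≠ 0 := by omega
    have hdiv : (Nat.gcd i k).divisors = i.divisors.filter (· ∣ k) := by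
      ext d
      simp [Nat.mem_divisors, Nat.dvd_gcd_iff, Nat.gcd_eq_zero_iff, hi.ne', hk0, and_assoc]
    rw [ArithmeticFunction.sigma_zero_apply, hdiv, ← Finset.sum_filter, Finset.sum_const,
      nsmul_eq_mul, mul_div_assoc]
  rw [Finset.sum_congr rfl h1, Finset.sum_comm]
  refine Finset.sum_congr rfl fun d hd => ?_
  rw [Nat.mem_divisors] at hd
  have hd0 : 0 < d := Nat.pos_of_dvd_of_pos hd.1 hi
  rw [← Finset.sum_filter]
  refine Finset.sum_nbij' (fun k => k / d) (fun m => m * d) ?_ ?_ ?_ ?_ ?_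
  · intro k hk
    simp only [Finset.mem_filter, Finset.mem_Icc] at hk
    obtain ⟨⟨h1k, h2k⟩, hdk⟩ := hk
    rw [Finset.mem_Icc]
    constructor
    · exact Nat.one_le_div_iff hd0 |>.2 (Nat.le_of_dvd (by omega) hdk)
    · exact Nat.div_le_div_right h2k
  · intro m hm
    rw [Finset.mem_Icc] at hm
    simp only [Finset.mem_filter, Finset.mem_Icc]
    refine ⟨⟨?_, ?_⟩, dvd_mul_left d m⟩
    · exact Nat.one_le_iff_ne_zero.2 (Nat.mul_ne_zero (by omega) hd0.ne')
    · exact (Nat.le_div_iff_mul_le hd0).1 hm.2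
  · intro k hk
    simp only [Finset.mem_filter] at hk
    exact Nat.div_mul_cancel hk.2
  · intro m hm
    exact Nat.mul_div_cancel _ hd0
  · intro k hk
    simp only [Finset.mem_filter] at hk
    rw [← Nat.cast_mul, Nat.div_mul_cancel hk.2]
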